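/- Let ξ₁, ξ₂, … be identically distributed real random variables with E[|ξ₁|³] < ∞, let μ ∈ ℝ, σ > 0, f ∈ (0,1), and T > 0. Set X_{n,k} = (μ − σ²/2)/n + σ·ξ_k/√n. Then there is a constant C (depending only on T, f, μ, σ and E|ξ₁|³) such that for all n ≥ 1: E[ sup_{0 ≤ t ≤ T} | Σ_{k=1}^{⌊nt⌋} ( ln(1 − f + f·e^{X_{n,k}}) − f·X_{n,k} − (1/2)·f(1−f)·X_{n,k}² ) | ] ≤ C·n^{−1/2}. -/

import Mathlib

open MeasureTheory ProbabilityTheory Real Filter Topology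


lemma remainder_cubic {f : ℝ} (hf0 : 0 < f) (hf1 : f < 1) (x : ℝ) :
    |Real.log (1 - f + f * Real.exp x) - f * x - (1/2) * (f * (1 - f)) * x ^ 2| ≤ |x| ^ 3 := by
  set u : ℝ → ℝ := fun y => f * Real.exp y / (1 - f + f * Real.exp y) with hu
  have hd : ∀ y, 0 < 1 - f + f * Real.exp y := fun y => by
    have := Real.exp_pos y; nlinarith
  have hu0 : ∀ y, 0 < u y := fun y => div_pos (by positivity) (hd y)
  have hu1 : ∀ y, u y < 1 := fun y => by
    rw [hu]; rw [div_lt_one (hd y)]; nlinarith [Real.exp_pos y]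
  -- derivative of u
  have hderu : ∀ y, HasDerivAt u (u y * (1 - u y)) y := by
    intro y
    have h1 : HasDerivAt (fun y => f * Real.exp y) (f * Real.exp y) y :=
      (Real.hasDerivAt_exp y).const_mul f
    have h2 : HasDerivAt (fun y => 1 - f + f * Real.exp y) (f * Real.exp y) y := by
      simpa using h1.const_add (1 - f)
    have := h1.div h2 (ne_of_gt (hd y))
    refine this.congr_deriv ?_
    have := hd y
    simp only [hu]
    field_simp
  set g : ℝ → ℝ := fun y =>
    Real.log (1 - f + f * Real.exp y) - f * y - (1/2) * (f * (1 - f)) * y ^ 2 with hg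
  set g1 : ℝ → ℝ := fun y => u y - f - (f * (1 - f)) * y with hg1
  set g2 : ℝ → ℝ := fun y => u y * (1 - u y) - f * (1 - f) with hg2
  have hderg : ∀ y, HasDerivAt g (g1 y) y := by
    intro y
    have h2 : HasDerivAt (fun y => 1 - f + f * Real.exp y) (f * Real.exp y) y := by
      simpa using ((Real.hasDerivAt_exp y).const_mul f).const_add (1 - f)
    have hlog : HasDerivAt (fun y => Real.log (1 - f + f * Real.exp y))
        (f * Real.exp y / (1 - f + f * Real.exp y)) y := h2.log (ne_of_gt (hd y))
    have hq : HasDerivAt (fun y : ℝ => (1/2) * (f * (1 - f)) * y ^ 2)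
        ((1/2) * (f * (1 - f)) * (2 * y)) y := by
      simpa using (hasDerivAt_pow 2 y).const_mul ((1/2) * (f * (1 - f)))
    have hl : HasDerivAt (fun y : ℝ => f * y) f y := by
      simpa using (hasDerivAt_id y).const_mul f
    have := (hlog.sub hl).sub hq
    refine this.congr_deriv ?_
    simp only [hg1, hu]
    ring
  have hderg1 : ∀ y, HasDerivAt g1 (g2 y) y := by
    intro y
    have := ((hderu y).sub_const f).sub ((hasDerivAt_id y).const_mul (f * (1 - f)))
    refine this.congr_deriv ?_
    simp only [hg2]; ring
  have hderg2 : ∀ y, HasDerivAt g2 (u y * (1 - u y) * (1 - 2 * u y)) y := by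
    intro y
    have := ((hderu y).mul ((hderu y).const_sub 1)).sub_const (f * (1 - f))
    refine this.congr_deriv ?_
    ring
  have hg2bd : ∀ y, |u y * (1 - u y) * (1 - 2 * u y)| ≤ 1/4 := by
    intro y
    have h1 := hu0 y; have h2 := hu1 y
    rw [abs_le]
    constructor <;> nlinarith [sq_nonneg (2 * u y - 1), sq_nonneg (u y), sq_nonneg (1 - u y),
      mul_pos h1 (by linarith : (0:ℝ) < 1 - u y), sq_nonneg (u y * (1 - u y)),
      sq_nonneg (2 * u y - 1 + u y * (1-u y)), sq_nonneg (2 * u y - 1 - u y * (1-u y))]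
  have hmem : ∀ y : ℝ, ∀ z ∈ Set.uIcc (0:ℝ) y, |z| ≤ |y| := by
    intro y z hz
    rw [Set.mem_uIcc] at hz
    rcases hz with ⟨h1, h2⟩ | ⟨h1, h2⟩
    · rw [abs_of_nonneg h1]; exact le_trans h2 (le_abs_self y)
    · rw [abs_of_nonpos h2]; exact le_trans (neg_le_neg h1) (neg_abs_le y |>.trans (le_abs_self y) |> fun _ => (neg_le_abs y))
  -- step A : |g2 y| ≤ |y|/4
  have hA : ∀ y : ℝ, |g2 y| ≤ (1/4) * |y| := by
    intro y
    have h0 : u 0 = f := by simp [hu]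
    have hg20 : g2 0 = 0 := by simp [hg2, h0]
    have := Convex.norm_image_sub_le_of_norm_hasDerivWithin_le
      (f := g2) (f' := fun z => u z * (1 - u z) * (1 - 2 * u z)) (C := 1/4)
      (s := Set.uIcc (0:ℝ) y)
      (fun z _ => (hderg2 z).hasDerivWithinAt) (fun z _ => hg2bd z)
      (convex_uIcc 0 y) Set.left_mem_uIcc Set.right_mem_uIcc
    simpa [hg20, Real.norm_eq_abs] using this
  -- step B : |g1 y| ≤ |y|^2/4
  have hB : ∀ y : ℝ, |g1 y| ≤ (1/4) * |y| ^ 2 := by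
    intro y
    have h0 : u 0 = f := by simp [hu]
    have hg10 : g1 0 = 0 := by simp [hg1, h0]
    have := Convex.norm_image_sub_le_of_norm_hasDerivWithin_le
      (f := g1) (f' := g2) (C := (1/4) * |y|)
      (s := Set.uIcc (0:ℝ) y)
      (fun z _ => (hderg1 z).hasDerivWithinAt)
      (fun z hz => le_trans (hA z) (by
        have := hmem y z hz
        nlinarith [abs_nonneg z, abs_nonneg y]))
      (convex_uIcc 0 y) Set.left_mem_uIcc Set.right_mem_uIcc
    rw [hg10, sub_zero, Real.norm_eq_abs, Real.norm_eq_abs, sub_zero] at this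
    calc |g1 y| ≤ (1/4) * |y| * |y| := this
    _ = (1/4) * |y| ^ 2 := by ring
  -- step C
  have h0 : u 0 = f := by simp [hu]
  have hg0 : g 0 = 0 := by simp [hg]
  have hC := Convex.norm_image_sub_le_of_norm_hasDerivWithin_le
      (f := g) (f' := g1) (C := (1/4) * |x| ^ 2)
      (s := Set.uIcc (0:ℝ) x)
      (fun z _ => (hderg z).hasDerivWithinAt)
      (fun z hz => le_trans (hB z) (by
        have := hmem x z hz
        nlinarith [abs_nonneg z, abs_nonneg x]))
      (convex_uIcc 0 x) Set.left_mem_uIcc Set.right_mem_uIcc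
  rw [hg0, sub_zero, Real.norm_eq_abs, Real.norm_eq_abs, sub_zero] at hC
  calc |g x| ≤ (1/4) * |x| ^ 2 * |x| := hC
  _ ≤ |x| ^ 3 := by nlinarith [abs_nonneg x]

lemma cube_split (a b c : ℝ) (hb : 0 ≤ b) :
    |a + b * c| ^ 3 ≤ 4 * (|a| ^ 3 + b ^ 3 * |c| ^ 3) := by
  have h1 : |a + b * c| ≤ |a| + b * |c| := by
    calc |a + b * c| ≤ |a| + |b * c| := abs_add_le a (b*c)
    _ = |a| + b * |c| := by rw [abs_mul, abs_of_nonneg hb]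
  have h2 : |a + b * c| ^ 3 ≤ (|a| + b * |c|) ^ 3 :=
    pow_le_pow_left₀ (abs_nonneg _) h1 3
  refine h2.trans ?_
  have ha := abs_nonneg a
  have hc := abs_nonneg c
  nlinarith [sq_nonneg (|a| - b * |c|), mul_nonneg (mul_nonneg hb hc) (sq_nonneg (|a| - b*|c|)),
    mul_nonneg ha (sq_nonneg (|a| - b*|c|))]

/-- the key remainder estimate for geometric high-frequency compounding.
With identically distributed `ξ₁, ξ₂, …` having `E|ξ₁|³ < ∞`, and
`X_{n,k} = (μ - σ²/2)/n + σ ξ_k/√n`, the expected uniform (over `t ∈ [0,T]`) error of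
the second-order Taylor approximation of `Σ_{k ≤ ⌊nt⌋} log(1 - f + f e^{X_{n,k}})`
is `O(n^{-1/2})`. -/
theorem geometric_hf_taylor_remainder
    {Ω : Type*} [MeasurableSpace Ω] (P : Measure Ω) [IsProbabilityMeasure P]
    (ξ : ℕ → Ω → ℝ) (hmeas : ∀ k, Measurable (ξ k))
    (hident : ∀ k, Measure.map (ξ k) P = Measure.map (ξ 1) P)
    (hmom3 : Integrable (fun ω => |ξ 1 ω| ^ 3) P)
    (μ σ : ℝ) (hσ : 0 < σ) (f : ℝ) (hf : f ∈ Set.Ioo (0 : ℝ) 1)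
    (T : ℝ) (hT : 0 < T) :
    ∃ C : ℝ, ∀ n : ℕ, 1 ≤ n →
      (∫ ω, (⨆ t ∈ Set.Icc (0 : ℝ) T,
        |∑ k ∈ Finset.Icc 1 ⌊(n : ℝ) * t⌋₊,
          (Real.log (1 - f + f * Real.exp ((μ - σ ^ 2 / 2) / n + σ * ξ k ω / Real.sqrt n))
            - f * ((μ - σ ^ 2 / 2) / n + σ * ξ k ω / Real.sqrt n)
            - (1 / 2) * (f * (1 - f))
              * ((μ - σ ^ 2 / 2) / n + σ * ξ k ω / Real.sqrt n) ^ 2)|) ∂P)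
      ≤ C / Real.sqrt n := by
  obtain ⟨hf0, hf1⟩ := hf
  set E3 : ℝ := ∫ ω, |ξ 1 ω| ^ 3 ∂P with hE3def
  have hE3 : 0 ≤ E3 := integral_nonneg fun ω => by positivity
  -- third moment facts for every k
  have hmm : Measurable fun x : ℝ => |x| ^ 3 := (measurable_id.abs).pow_const 3
  have hkey : ∀ k, Integrable (fun ω => |ξ k ω| ^ 3) P ∧ (∫ ω, |ξ k ω| ^ 3 ∂P) = E3 := by
    intro k
    have h1 : Integrable (fun x : ℝ => |x| ^ 3) (Measure.map (ξ 1) P) :=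
      (integrable_map_measure hmm.aestronglyMeasurable (hmeas 1).aemeasurable).mpr hmom3
    have h2 : Integrable (fun x : ℝ => |x| ^ 3) (Measure.map (ξ k) P) := by
      rw [hident k]; exact h1
    constructor
    · exact (integrable_map_measure hmm.aestronglyMeasurable (hmeas k).aemeasurable).mp h2
    · calc (∫ ω, |ξ k ω| ^ 3 ∂P) = ∫ x, |x| ^ 3 ∂(Measure.map (ξ k) P) :=
        (integral_map (hmeas k).aemeasurable hmm.aestronglyMeasurable).symm
      _ = ∫ x, |x| ^ 3 ∂(Measure.map (ξ 1) P) := by rw [hident k]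
      _ = E3 := integral_map (hmeas 1).aemeasurable hmm.aestronglyMeasurable
  refine ⟨4 * T * (|μ - σ ^ 2 / 2| ^ 3 + σ ^ 3 * E3), fun n hn => ?_⟩
  have hn0 : (0:ℝ) < n := by exact_mod_cast hn
  have hs0 : (0:ℝ) < Real.sqrt n := Real.sqrt_pos.mpr hn0
  have hs1 : (1:ℝ) ≤ Real.sqrt n := by
    rw [show (1:ℝ) = Real.sqrt 1 by simp]
    exact Real.sqrt_le_sqrt (by exact_mod_cast hn)
  have hssq : Real.sqrt n * Real.sqrt n = n := Real.mul_self_sqrt hn0.le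
  set a : ℝ := (μ - σ ^ 2 / 2) / n with hadef
  set b : ℝ := σ / Real.sqrt n with hbdef
  have hb0 : 0 ≤ b := by positivity
  set N : ℕ := ⌊(n : ℝ) * T⌋₊ with hNdef
  set X : ℕ → Ω → ℝ := fun k ω => (μ - σ ^ 2 / 2) / n + σ * ξ k ω / Real.sqrt n with hX
  set term : ℕ → Ω → ℝ := fun k ω =>
    Real.log (1 - f + f * Real.exp (X k ω)) - f * X k ω
      - (1 / 2) * (f * (1 - f)) * X k ω ^ 2 with hterm
  set bnd : ℕ → Ω → ℝ := fun k ω => 4 * (|a| ^ 3 + b ^ 3 * |ξ k ω| ^ 3) with hbnd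
  have htermle : ∀ k ω, |term k ω| ≤ bnd k ω := by
    intro k ω
    calc |term k ω| ≤ |X k ω| ^ 3 := remainder_cubic hf0 hf1 (X k ω)
    _ = |a + b * ξ k ω| ^ 3 := by
        congr 1; congr 1; simp only [hX, hadef, hbdef]; ring
    _ ≤ bnd k ω := cube_split a b (ξ k ω) hb0
  have hbnd_nonneg : ∀ k ω, 0 ≤ bnd k ω := fun k ω => by
    simp only [hbnd]; positivity
  have hbnd_int : ∀ k, Integrable (bnd k) P := by
    intro k
    simp only [hbnd]
    exact (((integrable_const (|a| ^ 3)).add ((hkey k).1.const_mul (b ^ 3))).const_mul 4)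
  have hbnd_val : ∀ k, (∫ ω, bnd k ω ∂P) = 4 * (|a| ^ 3 + b ^ 3 * E3) := by
    intro k
    simp only [hbnd]
    rw [integral_const_mul, integral_add (integrable_const _)
      ((hkey k).1.const_mul (b ^ 3)), integral_const_mul, integral_const, (hkey k).2]
    simp
  -- the dominating integrable function
  set M : Ω → ℝ := fun ω => ∑ k ∈ Finset.Icc 1 N, bnd k ω with hM
  have hM_int : Integrable M P := integrable_finset_sum _ fun k _ => hbnd_int k
  have hsup_le : ∀ ω, (⨆ t ∈ Set.Icc (0 : ℝ) T,
      |∑ k ∈ Finset.Icc 1 ⌊(n : ℝ) * t⌋₊, term k ω|) ≤ M ω := by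
    intro ω
    have hMnn : 0 ≤ M ω := Finset.sum_nonneg fun k _ => hbnd_nonneg k ω
    refine Real.iSup_le (fun t => Real.iSup_le (fun ht => ?_) hMnn) hMnn
    have hsub : Finset.Icc 1 ⌊(n : ℝ) * t⌋₊ ⊆ Finset.Icc 1 N :=
      Finset.Icc_subset_Icc_right (Nat.floor_le_floor
        (mul_le_mul_of_nonneg_left ht.2 hn0.le))
    calc |∑ k ∈ Finset.Icc 1 ⌊(n : ℝ) * t⌋₊, term k ω|
        ≤ ∑ k ∈ Finset.Icc 1 ⌊(n : ℝ) * t⌋₊, |term k ω| := Finset.abs_sum_le_sum_abs _ _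
      _ ≤ ∑ k ∈ Finset.Icc 1 N, |term k ω| :=
          Finset.sum_le_sum_of_subset_of_nonneg hsub fun k _ _ => abs_nonneg _
      _ ≤ M ω := Finset.sum_le_sum fun k _ => htermle k ω
  have hsup_nonneg : ∀ ω, 0 ≤ (⨆ t ∈ Set.Icc (0 : ℝ) T,
      |∑ k ∈ Finset.Icc 1 ⌊(n : ℝ) * t⌋₊, term k ω|) := fun ω =>
    Real.iSup_nonneg fun t => Real.iSup_nonneg fun _ => abs_nonneg _
  have hint_le : (∫ ω, (⨆ t ∈ Set.Icc (0 : ℝ) T,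
      |∑ k ∈ Finset.Icc 1 ⌊(n : ℝ) * t⌋₊, term k ω|) ∂P) ≤ ∫ ω, M ω ∂P :=
    integral_mono_of_nonneg (Filter.Eventually.of_forall hsup_nonneg) hM_int
      (Filter.Eventually.of_forall hsup_le)
  have hMval : (∫ ω, M ω ∂P) = (N : ℝ) * (4 * (|a| ^ 3 + b ^ 3 * E3)) := by
    rw [hM, integral_finset_sum _ fun k _ => hbnd_int k]
    rw [Finset.sum_congr rfl fun k _ => hbnd_val k]
    simp [Nat.card_Icc]
  refine hint_le.trans ?_
  rw [hMval]
  -- final arithmetic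
  have hNle : (N : ℝ) ≤ n * T := Nat.floor_le (by positivity)
  have haval : |a| ^ 3 ≤ |μ - σ ^ 2 / 2| ^ 3 / n ^ 3 := by
    rw [hadef, abs_div, abs_of_nonneg hn0.le, div_pow]
  have hbval : b ^ 3 = σ ^ 3 / Real.sqrt n ^ 3 := by
    rw [hbdef, div_pow]
  have hNnn : (0:ℝ) ≤ N := Nat.cast_nonneg N
  have h1 : (N : ℝ) * (4 * (|a| ^ 3 + b ^ 3 * E3))
      ≤ (n * T) * (4 * (|μ - σ ^ 2 / 2| ^ 3 / n ^ 3 + σ ^ 3 / Real.sqrt n ^ 3 * E3)) := by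
    apply mul_le_mul hNle _ _ (by positivity)
    · apply mul_le_mul_of_nonneg_left _ (by norm_num)
      rw [hbval]
      exact add_le_add haval le_rfl
    · positivity
  refine h1.trans ?_
  have hn_eq : (n:ℝ) = Real.sqrt n * Real.sqrt n := hssq.symm
  have habs : (0:ℝ) ≤ |μ - σ ^ 2 / 2| ^ 3 := by positivity
  set s := Real.sqrt n with hsdef
  rw [hn_eq, le_div_iff₀ hs0]
  have e : s * s * T * (4 * (|μ - σ ^ 2 / 2| ^ 3 / (s * s) ^ 3 + σ ^ 3 / s ^ 3 * E3)) * s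
      = 4 * T * (|μ - σ ^ 2 / 2| ^ 3 / s ^ 3 + σ ^ 3 * E3) := by
    field_simp
  rw [e]
  have hs3 : (1:ℝ) ≤ s ^ 3 := one_le_pow₀ hs1
  have hdiv : |μ - σ ^ 2 / 2| ^ 3 / s ^ 3 ≤ |μ - σ ^ 2 / 2| ^ 3 :=
    div_le_self habs hs3
  have : 4 * T * (|μ - σ ^ 2 / 2| ^ 3 / s ^ 3 + σ ^ 3 * E3)
      ≤ 4 * T * (|μ - σ ^ 2 / 2| ^ 3 + σ ^ 3 * E3) := by
    apply mul_le_mul_of_nonneg_left _ (by positivity)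
    exact add_le_add hdiv le_rfl
  exact this
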